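/- Let I be a proper graded ideal of R and consider the conditions: (1) I is a graded φ-1-absorbing prime ideal of R; (2) for all nonunits a, b ∈ h(R) with ab ∉ I, (I : ab) = I ∪ (φ(I) : ab); (3) for all nonunits a, b ∈ h(R) with ab ∉ I, either (I : ab) = I or (I : ab) = (φ(I) : ab); (4) for all nonunits a, b ∈ h(R) and every proper graded ideal L of R with abL ⊆ I and abL ⊄ φ(I), either ab ∈ I or L ⊆ I; (5) for every nonunit a ∈ h(R) and all proper graded ideals K, L of R with aKL ⊆ I and aKL ⊄ φ(I), either aK ⊆ I or L ⊆ I; (6) for all proper graded ideals J, K, L of R with JKL ⊆ I and JKL ⊄ φ(I), either JK ⊆ I or L ⊆ I. Then (6) ⇒ (5) ⇒ (4) ⇒ (3) ⇒ (2) ⇒ (1). -/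

import Mathlib

/-- The underlying set of an element of `GI(R) ∪ {∅}`: `none` plays the role of `∅`. -/
def phiSet {ι R : Type*} [AddGroup ι] [DecidableEq ι] [CommRing R]
    (𝒜 : ι → AddSubgroup R) [GradedRing 𝒜]
    (o : Option (HomogeneousIdeal 𝒜)) : Set R :=
  {x | ∃ J ∈ o, x ∈ J}

section

variable {ι R : Type*} [AddGroup ι] [DecidableEq ι] [CommRing R]
  (𝒜 : ι → AddSubgroup R) [GradedRing 𝒜]
  (φ : HomogeneousIdeal 𝒜 → Option (HomogeneousIdeal 𝒜)) (I : HomogeneousIdeal 𝒜)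

/-- Condition (1): `I` is a graded `φ`-1-absorbing prime ideal of `R`. -/
def Cond1 : Prop :=
  ∀ a b c : R, SetLike.IsHomogeneousElem 𝒜 a → SetLike.IsHomogeneousElem 𝒜 b →
    SetLike.IsHomogeneousElem 𝒜 c → ¬IsUnit a → ¬IsUnit b → ¬IsUnit c →
    a * b * c ∈ I.toIdeal → a * b * c ∉ phiSet 𝒜 (φ I) →
    a * b ∈ I.toIdeal ∨ c ∈ I.toIdeal

/-- Condition (2): for all nonunit homogeneous `a, b` with `ab ∉ I`,
`(I : ab) = I ∪ (φ(I) : ab)`. -/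
def Cond2 : Prop :=
  ∀ a b : R, SetLike.IsHomogeneousElem 𝒜 a → SetLike.IsHomogeneousElem 𝒜 b →
    ¬IsUnit a → ¬IsUnit b → a * b ∉ I.toIdeal →
    {x : R | a * b * x ∈ I.toIdeal} =
      (I.toIdeal : Set R) ∪ {x : R | a * b * x ∈ phiSet 𝒜 (φ I)}

/-- Condition (3): for all nonunit homogeneous `a, b` with `ab ∉ I`, either
`(I : ab) = I` or `(I : ab) = (φ(I) : ab)`. -/
def Cond3 : Prop :=
  ∀ a b : R, SetLike.IsHomogeneousElem 𝒜 a → SetLike.IsHomogeneousElem 𝒜 b →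
    ¬IsUnit a → ¬IsUnit b → a * b ∉ I.toIdeal →
    {x : R | a * b * x ∈ I.toIdeal} = (I.toIdeal : Set R) ∨
      {x : R | a * b * x ∈ I.toIdeal} = {x : R | a * b * x ∈ phiSet 𝒜 (φ I)}

/-- Condition (4): for all nonunit homogeneous `a, b` and every proper graded ideal `L`
with `abL ⊆ I` and `abL ⊄ φ(I)`, either `ab ∈ I` or `L ⊆ I`. -/
def Cond4 : Prop :=
  ∀ a b : R, SetLike.IsHomogeneousElem 𝒜 a → SetLike.IsHomogeneousElem 𝒜 b →
    ¬IsUnit a → ¬IsUnit b → ∀ L : HomogeneousIdeal 𝒜, L.toIdeal ≠ ⊤ →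
    (∀ x ∈ L.toIdeal, a * b * x ∈ I.toIdeal) →
    ¬(∀ x ∈ L.toIdeal, a * b * x ∈ phiSet 𝒜 (φ I)) →
    a * b ∈ I.toIdeal ∨ L.toIdeal ≤ I.toIdeal

/-- Condition (5): for every nonunit homogeneous `a` and all proper graded ideals `K, L`
with `aKL ⊆ I` and `aKL ⊄ φ(I)`, either `aK ⊆ I` or `L ⊆ I`. -/
def Cond5 : Prop :=
  ∀ a : R, SetLike.IsHomogeneousElem 𝒜 a → ¬IsUnit a →
    ∀ K L : HomogeneousIdeal 𝒜, K.toIdeal ≠ ⊤ → L.toIdeal ≠ ⊤ →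
    (∀ x ∈ K.toIdeal, ∀ y ∈ L.toIdeal, a * x * y ∈ I.toIdeal) →
    ¬(∀ x ∈ K.toIdeal, ∀ y ∈ L.toIdeal, a * x * y ∈ phiSet 𝒜 (φ I)) →
    (∀ x ∈ K.toIdeal, a * x ∈ I.toIdeal) ∨ L.toIdeal ≤ I.toIdeal

/-- Condition (6): for all proper graded ideals `J, K, L` with `JKL ⊆ I` and
`JKL ⊄ φ(I)`, either `JK ⊆ I` or `L ⊆ I`. -/
def Cond6 : Prop :=
  ∀ J K L : HomogeneousIdeal 𝒜, J.toIdeal ≠ ⊤ → K.toIdeal ≠ ⊤ → L.toIdeal ≠ ⊤ →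
    J.toIdeal * K.toIdeal * L.toIdeal ≤ I.toIdeal →
    ¬((J.toIdeal * K.toIdeal * L.toIdeal : Ideal R) : Set R) ⊆ phiSet 𝒜 (φ I) →
    J.toIdeal * K.toIdeal ≤ I.toIdeal ∨ L.toIdeal ≤ I.toIdeal

end

section Aux

variable {ι R : Type*} [AddGroup ι] [DecidableEq ι] [CommRing R]
  (𝒜 : ι → AddSubgroup R) [GradedRing 𝒜]

/-- The colon ideal `(I : r)`. -/
def colonId (r : R) (Id : Ideal R) : Ideal R where
  carrier := {x | r * x ∈ Id}
  add_mem' := by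
    intro a b ha hb
    show r * (a + b) ∈ Id
    rw [mul_add]
    exact add_mem ha hb
  zero_mem' := by
    show r * 0 ∈ Id
    rw [mul_zero]; exact zero_mem _
  smul_mem' := by
    intro c x hx
    show r * (c * x) ∈ Id
    have : r * (c * x) = c * (r * x) := by ring
    rw [this]
    exact Ideal.mul_mem_left _ _ hx

lemma mem_colonId {r : R} {Id : Ideal R} {x : R} : x ∈ colonId r Id ↔ r * x ∈ Id := Iff.rfl

lemma colonId_homogeneous (I : HomogeneousIdeal 𝒜) {r : R} (hr : SetLike.IsHomogeneousElem 𝒜 r) :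
    Ideal.IsHomogeneous 𝒜 (colonId r I.toIdeal) := by
  obtain ⟨g, hg⟩ := hr
  intro i x hx
  rw [mem_colonId] at hx ⊢
  have h1 : (DirectSum.decompose 𝒜 (r * x) (g + i) : R) =
      r * (DirectSum.decompose 𝒜 x i : R) :=
    DirectSum.coe_decompose_mul_add_of_left_mem 𝒜 hg
  have h2 := I.is_homogeneous' (g + i) hx
  rwa [h1] at h2

/-- The colon ideal `(I : r)` for homogeneous `r`, as a homogeneous ideal. -/
def colonHI (I : HomogeneousIdeal 𝒜) {r : R} (hr : SetLike.IsHomogeneousElem 𝒜 r) :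
    HomogeneousIdeal 𝒜 :=
  ⟨colonId r I.toIdeal, colonId_homogeneous 𝒜 I hr⟩

lemma mem_colonHI (I : HomogeneousIdeal 𝒜) {r : R} (hr : SetLike.IsHomogeneousElem 𝒜 r) (x : R) :
    x ∈ (colonHI 𝒜 I hr).toIdeal ↔ r * x ∈ I.toIdeal := Iff.rfl

/-- Homogeneous span of a single homogeneous element. -/
def spanHI {a : R} (ha : SetLike.IsHomogeneousElem 𝒜 a) : HomogeneousIdeal 𝒜 :=
  ⟨(Ideal.span {a} : Ideal R), Ideal.homogeneous_span 𝒜 _ (by rintro x rfl; exact ha)⟩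

lemma mem_spanHI {a : R} (ha : SetLike.IsHomogeneousElem 𝒜 a) {x : R} :
    x ∈ (spanHI 𝒜 ha).toIdeal ↔ x ∈ Ideal.span ({a} : Set R) := Iff.rfl

end Aux


/-- For a proper graded ideal `I` and a function `φ : GI(R) → GI(R) ∪ {∅}` with
`φ(I) ⊆ I`, we have the implications `(6) ⇒ (5) ⇒ (4) ⇒ (3) ⇒ (2) ⇒ (1)` of
Theorem `Theorem 1`. -/
theorem stmt5 {ι R : Type*} [AddGroup ι] [DecidableEq ι] [CommRing R] [Nontrivial R]
    (𝒜 : ι → AddSubgroup R) [GradedRing 𝒜]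
    (φ : HomogeneousIdeal 𝒜 → Option (HomogeneousIdeal 𝒜))
    (hφ : ∀ J : HomogeneousIdeal 𝒜, phiSet 𝒜 (φ J) ⊆ (J.toIdeal : Set R))
    (I : HomogeneousIdeal 𝒜) (hproper : I.toIdeal ≠ ⊤) :
    (Cond6 𝒜 φ I → Cond5 𝒜 φ I) ∧ (Cond5 𝒜 φ I → Cond4 𝒜 φ I) ∧
    (Cond4 𝒜 φ I → Cond3 𝒜 φ I) ∧ (Cond3 𝒜 φ I → Cond2 𝒜 φ I) ∧
    (Cond2 𝒜 φ I → Cond1 𝒜 φ I) := by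
  refine ⟨?_, ?_, ?_, ?_, ?_⟩
  · -- 6 ⇒ 5
    intro h6 a ha hua K L hK hL hsub hnsub
    set J := spanHI 𝒜 ha with hJ
    have haJ : a ∈ J.toIdeal := (mem_spanHI 𝒜 ha).mpr (Ideal.subset_span rfl)
    have hJtop : J.toIdeal ≠ ⊤ := fun h => by
      have h' : Ideal.span ({a} : Set R) = ⊤ := h
      exact hua (Ideal.span_singleton_eq_top.mp h')
    have hmul : J.toIdeal * K.toIdeal * L.toIdeal ≤ I.toIdeal := by
      rw [mul_assoc, Ideal.mul_le]
      intro r hr s hs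
      have hr' : r ∈ Ideal.span ({a} : Set R) := (mem_spanHI 𝒜 ha).mp hr
      rw [Ideal.mem_span_singleton] at hr'
      obtain ⟨c, rfl⟩ := hr'
      refine Submodule.mul_induction_on hs (fun x hx y hy => ?_) (fun x y hx hy => ?_)
      · have : a * c * (x * y) = c * (a * x * y) := by ring
        rw [this]
        exact Ideal.mul_mem_left _ _ (hsub x hx y hy)
      · rw [mul_add]; exact add_mem hx hy
    have hnphi : ¬((J.toIdeal * K.toIdeal * L.toIdeal : Ideal R) : Set R) ⊆
        phiSet 𝒜 (φ I) := by
      intro hss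
      exact hnsub fun x hx y hy => hss
        (Ideal.mul_mem_mul (Ideal.mul_mem_mul haJ hx) hy)
    rcases h6 J K L hJtop hK hL hmul hnphi with h | h
    · exact Or.inl fun x hx => h (Ideal.mul_mem_mul haJ hx)
    · exact Or.inr h
  · -- 5 ⇒ 4
    intro h5 a b ha hb hua hub L hL hsub hnsub
    set K := spanHI 𝒜 hb with hK
    have hbK : b ∈ K.toIdeal := (mem_spanHI 𝒜 hb).mpr (Ideal.subset_span rfl)
    have hKtop : K.toIdeal ≠ ⊤ := fun h => by
      have h' : Ideal.span ({b} : Set R) = ⊤ := h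
      exact hub (Ideal.span_singleton_eq_top.mp h')
    have hsub' : ∀ x ∈ K.toIdeal, ∀ y ∈ L.toIdeal, a * x * y ∈ I.toIdeal := by
      intro x hx y hy
      have hx' : x ∈ Ideal.span ({b} : Set R) := (mem_spanHI 𝒜 hb).mp hx
      rw [Ideal.mem_span_singleton] at hx'
      obtain ⟨c, rfl⟩ := hx'
      have : a * (b * c) * y = c * (a * b * y) := by ring
      rw [this]
      exact Ideal.mul_mem_left _ _ (hsub y hy)
    have hnsub' : ¬(∀ x ∈ K.toIdeal, ∀ y ∈ L.toIdeal, a * x * y ∈ phiSet 𝒜 (φ I)) :=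
      fun h => hnsub fun y hy => h b hbK y hy
    rcases h5 a ha hua K L hKtop hL hsub' hnsub' with h | h
    · exact Or.inl (h b hbK)
    · exact Or.inr h
  · -- 4 ⇒ 3
    intro h4 a b ha hb hua hub hab
    by_cases heq : {x : R | a * b * x ∈ I.toIdeal} = {x : R | a * b * x ∈ phiSet 𝒜 (φ I)}
    · exact Or.inr heq
    left
    have hhab : SetLike.IsHomogeneousElem 𝒜 (a * b) := SetLike.IsHomogeneousElem.mul ha hb
    set C := colonHI 𝒜 I hhab with hC
    have hCtop : C.toIdeal ≠ ⊤ := by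
      intro h
      apply hab
      have h1 : (1 : R) ∈ C.toIdeal := by rw [h]; trivial
      have := (mem_colonHI 𝒜 I hhab 1).mp h1
      rwa [mul_one] at this
    have hsubset : {x : R | a * b * x ∈ phiSet 𝒜 (φ I)} ⊆ {x : R | a * b * x ∈ I.toIdeal} :=
      fun x hx => hφ I hx
    have hex : ∃ x, a * b * x ∈ I.toIdeal ∧ a * b * x ∉ phiSet 𝒜 (φ I) := by
      by_contra hc
      push_neg at hc
      exact heq (Set.Subset.antisymm (fun x hx => hc x hx) hsubset)
    obtain ⟨x0, hx0I, hx0phi⟩ := hex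
    have hnsub : ¬(∀ x ∈ C.toIdeal, a * b * x ∈ phiSet 𝒜 (φ I)) :=
      fun h => hx0phi (h x0 ((mem_colonHI 𝒜 I hhab x0).mpr hx0I))
    rcases h4 a b ha hb hua hub C hCtop
        (fun x hx => (mem_colonHI 𝒜 I hhab x).mp hx) hnsub with h | h
    · exact absurd h hab
    · exact Set.Subset.antisymm (fun x hx => h ((mem_colonHI 𝒜 I hhab x).mpr hx))
        (fun x hx => Ideal.mul_mem_left _ _ hx)
  · -- 3 ⇒ 2
    intro h3 a b ha hb hua hub hab
    rcases h3 a b ha hb hua hub hab with h | h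
    · rw [h]
      apply Set.Subset.antisymm
      · exact Set.subset_union_left
      · rintro x (hx | hx)
        · exact hx
        · have h1 : x ∈ {x : R | a * b * x ∈ I.toIdeal} := hφ I hx
          rw [h] at h1
          exact h1
    · rw [h]
      apply Set.Subset.antisymm
      · exact Set.subset_union_right
      · rintro x (hx | hx)
        · have h1 : x ∈ {x : R | a * b * x ∈ I.toIdeal} :=
            Ideal.mul_mem_left _ _ hx
          rw [h] at h1
          exact h1
        · exact hx
  · -- 2 ⇒ 1
    intro h2 a b c ha hb hc hua hub huc habc hnphi
    by_cases hab : a * b ∈ I.toIdeal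
    · exact Or.inl hab
    right
    have heq := h2 a b ha hb hua hub hab
    have hcmem : c ∈ {x : R | a * b * x ∈ I.toIdeal} := habc
    rw [heq] at hcmem
    rcases hcmem with h | h
    · exact h
    · exact absurd h hnphi
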